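/- arXiv:math/0409080 — 3 statements merged into one kernel-verified Lean document; each statement's English description precedes it below -/
import Mathlib

section
/- Let M and N be matroids with finite disjoint ground sets S and T, let L be the free product M □ N, and let U ⊆ S ∪ T with |U| = |S|. If U contains an element of T that is not a loop of N, and the complement V = (S ∪ T) \ U contains an element of S that is not an isthmus (coloop) of M, then rk_L(U) > rk(M). -/
open Set Matroid

/-- The rank of a set `X` in a matroid `M`: the maximum cardinality of an
independent subset of `X`.  For `X = M.E` this is the rank of `M`. -/
noncomputable def mrk {α : Type*} (M : Matroid α) (X : Set α) : ℕ :=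
  sSup (Set.ncard '' {I | M.Indep I ∧ I ⊆ X})

lemma mrk_bdd {α : Type*} {M : Matroid α} (hE : M.E.Finite) (X : Set α) :
    BddAbove (Set.ncard '' {I | M.Indep I ∧ I ⊆ X}) := by
  refine ⟨M.E.ncard, ?_⟩
  rintro n ⟨I, ⟨hI, -⟩, rfl⟩
  exact Set.ncard_le_ncard hI.subset_ground hE

lemma le_mrk {α : Type*} {M : Matroid α} (hE : M.E.Finite) {I X : Set α}
    (hI : M.Indep I) (hIX : I ⊆ X) : I.ncard ≤ mrk M X :=
  le_csSup (mrk_bdd hE X) ⟨I, ⟨hI, hIX⟩, rfl⟩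

lemma mrk_eq_of_basis {α : Type*} {M : Matroid α} (hE : M.E.Finite) {I X : Set α}
    (hI : M.IsBasis I X) : mrk M X = I.ncard := by
  refine le_antisymm (csSup_le ⟨0, ∅, ⟨M.empty_indep, empty_subset _⟩, by simp⟩ ?_)
    (le_mrk hE hI.indep hI.subset)
  rintro n ⟨I', ⟨hI', hI'X⟩, rfl⟩
  obtain ⟨J, hJ, hI'J⟩ := hI'.subset_isBasis_of_subset hI'X hI.subset_ground
  have h1 : I'.ncard ≤ J.ncard :=
    Set.ncard_le_ncard hI'J (hE.subset hJ.indep.subset_ground)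
  have h2 : J.encard = I.encard := hJ.encard_eq_encard hI
  have : J.ncard = I.ncard := by rw [Set.ncard_def, h2, ← Set.ncard_def]
  omega

lemma mrk_le_add {α : Type*} {M : Matroid α} (hE : M.E.Finite) (X Y : Set α) (hXY : (X \ Y).Finite) :
    mrk M X ≤ mrk M Y + (X \ Y).ncard := by
  refine csSup_le ⟨0, ∅, ⟨M.empty_indep, empty_subset _⟩, by simp⟩ ?_
  rintro n ⟨I, ⟨hI, hIX⟩, rfl⟩
  have hIfin : I.Finite := hE.subset hI.subset_ground
  have h1 : (I ∩ Y).ncard + (I \ Y).ncard = I.ncard :=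
    Set.ncard_inter_add_ncard_diff_eq_ncard I Y hIfin
  have h2 : (I ∩ Y).ncard ≤ mrk M Y :=
    le_mrk hE (hI.subset inter_subset_left) inter_subset_right
  have h3 : (I \ Y).ncard ≤ (X \ Y).ncard :=
    Set.ncard_le_ncard (diff_subset_diff_left hIX) hXY
  omega

/-- A loop of a matroid `N` is an element contained in no independent set of `N`. -/
def IsLoopOf {α : Type*} (N : Matroid α) (e : α) : Prop := ∀ I, N.Indep I → e ∉ I

/-- An isthmus (coloop) of a matroid `M` is an element contained in every basis of `M`. -/
def IsIsthmusOf {α : Type*} (M : Matroid α) (e : α) : Prop := ∀ B, M.IsBase B → e ∈ B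

/-- **Lemma 5.** Let `L = M □ N` and `U ⊆ S ∪ T` with `|U| = |S|`.  If `U` contains a
nonloop of `N` and the complement of `U` contains a nonisthmus of `M`, then
`rk_L(U) > rk(M)`. -/
theorem stmt_7 {α : Type*} (M N : Matroid α) (S T : Set α)
    (hS : S.Finite) (hT : T.Finite) (hMS : M.E = S) (hNT : N.E = T)
    (hST : Disjoint S T)
    (L : Matroid α) (hLE : L.E = S ∪ T)
    (hLI : ∀ A : Set α, L.Indep A ↔ A ⊆ S ∪ T ∧ M.Indep (A ∩ S) ∧
      (A ∩ T).ncard - mrk N (A ∩ T) ≤ mrk M S - mrk M (A ∩ S))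
    (U : Set α) (hU : U ⊆ S ∪ T) (hUcard : U.ncard = S.ncard)
    (hnl : ∃ e ∈ U ∩ T, ¬ IsLoopOf N e)
    (hni : ∃ e ∈ ((S ∪ T) \ U) ∩ S, ¬ IsIsthmusOf M e) :
    mrk M S < mrk L U := by
  have hME : M.E.Finite := hMS ▸ hS
  have hNE : N.E.Finite := hNT ▸ hT
  have hLEfin : L.E.Finite := hLE ▸ hS.union hT
  obtain ⟨e, heUT, henl⟩ := hnl
  obtain ⟨f, hfmem, hfni⟩ := hni
  have hfS : f ∈ S := hfmem.2
  have hfU : f ∉ U := hfmem.1.2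
  -- {e} is independent in N
  obtain ⟨I₀, hI₀, heI₀⟩ : ∃ I, N.Indep I ∧ e ∈ I := by
    by_contra h; push_neg at h; exact henl fun I hI => h I hI
  have heN : N.Indep {e} := hI₀.subset (singleton_subset_iff.2 heI₀)
  -- a base of M avoiding f
  obtain ⟨B, hB, hfB⟩ : ∃ B, M.IsBase B ∧ f ∉ B := by
    by_contra h; push_neg at h; exact hfni fun B hB => h B hB
  -- a basis I of U ∩ S
  obtain ⟨I, hI⟩ := M.exists_isBasis (U ∩ S) (by rw [hMS]; exact inter_subset_right)
  have hIS : I ⊆ S := hI.subset.trans inter_subset_right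
  have hIU : I ⊆ U := hI.subset.trans inter_subset_left
  have hIfin : I.Finite := hS.subset hIS
  have hrUS : mrk M (U ∩ S) = I.ncard := mrk_eq_of_basis hME hI
  have hIle : I.ncard ≤ mrk M S := le_mrk hME hI.indep hIS
  -- rank of M equals B.ncard, and B ⊆ S \ {f}
  have hBS : B ⊆ S := hMS ▸ hB.subset_ground
  have hrS : mrk M S = B.ncard := by
    have : M.IsBasis B S := hMS ▸ hB.isBasis_ground
    exact mrk_eq_of_basis hME this
  -- key cardinality estimate
  have hSU : (S \ U).ncard = (U ∩ T).ncard := by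
    have h1 : (S ∩ U).ncard + (S \ U).ncard = S.ncard :=
      Set.ncard_inter_add_ncard_diff_eq_ncard S U hS
    have hUeq : U = (U ∩ S) ∪ (U ∩ T) := by
      rw [← inter_union_distrib_left, inter_eq_left.2 hU]
    have h2 : U.ncard = (U ∩ S).ncard + (U ∩ T).ncard := by
      conv_lhs => rw [hUeq]
      rw [Set.ncard_union_eq (hST.mono inter_subset_right inter_subset_right)
        (hS.subset inter_subset_right) (hT.subset inter_subset_right)]
    have h3 : (S ∩ U).ncard = (U ∩ S).ncard := by rw [inter_comm]
    omega
  have hfSU : f ∈ S \ U := ⟨hfS, hfU⟩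
  have key : mrk M S + 1 ≤ I.ncard + (U ∩ T).ncard := by
    have h1 : mrk M S ≤ mrk M (S \ {f}) :=
      hrS ▸ le_mrk hME hB.indep (subset_diff_singleton hBS hfB)
    have h2 : mrk M (S \ {f}) ≤ mrk M (U ∩ S) + ((S \ {f}) \ (U ∩ S)).ncard :=
      mrk_le_add hME _ _ (hS.diff.diff)
    have h4 : (S \ {f}) \ (U ∩ S) = (S \ U) \ {f} := by
      ext x; simp only [mem_diff, mem_inter_iff, mem_singleton_iff]; tauto
    have h5 : ((S \ U) \ {f}).ncard + 1 = (S \ U).ncard :=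
      Set.ncard_diff_singleton_add_one hfSU hS.diff
    rw [h4, hrUS] at h2
    omega
  set k := mrk M S - I.ncard with hk
  have heU : e ∈ U := heUT.1
  have heT : e ∈ T := heUT.2
  -- choose J ⊆ U ∩ T with e ∈ J and |J| = k + 1
  have hUTfin : (U ∩ T).Finite := hT.subset inter_subset_right
  have hcard_e : ((U ∩ T) \ {e}).ncard + 1 = (U ∩ T).ncard :=
    Set.ncard_diff_singleton_add_one heUT hUTfin
  obtain ⟨J₀, hJ₀sub, hJ₀card⟩ := Set.exists_subset_card_eq
    (show k ≤ ((U ∩ T) \ {e}).ncard by omega)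
  set J := insert e J₀ with hJ
  have heJ₀ : e ∉ J₀ := fun h => (hJ₀sub h).2 rfl
  have hJsub : J ⊆ U ∩ T := insert_subset heUT (hJ₀sub.trans diff_subset)
  have hJfin : J.Finite := hUTfin.subset hJsub
  have hJcard : J.ncard = k + 1 := by
    rw [hJ, Set.ncard_insert_of_notMem heJ₀ (hUTfin.subset (hJ₀sub.trans diff_subset))]
    omega
  have hJT : J ⊆ T := hJsub.trans inter_subset_right
  -- the set A = I ∪ J
  set A := I ∪ J with hA
  have hAS : A ∩ S = I := by
    rw [hA, union_inter_distrib_right, inter_eq_left.2 hIS,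
      (hST.symm.mono hJT subset_rfl).inter_eq, union_empty]
  have hAT : A ∩ T = J := by
    rw [hA, union_inter_distrib_right, inter_eq_left.2 hJT,
      (hST.mono hIS subset_rfl).inter_eq, empty_union]
  have hmrkI : mrk M I = I.ncard := mrk_eq_of_basis hME hI.indep.isBasis_self
  have hmrkJ : 1 ≤ mrk N J := by
    have : ({e} : Set α).ncard ≤ mrk N J :=
      le_mrk hNE heN (singleton_subset_iff.2 (mem_insert e J₀))
    simpa using this
  have hAindep : L.Indep A := by
    rw [hLI]
    refine ⟨union_subset (hIS.trans subset_union_left) (hJT.trans subset_union_right), ?_, ?_⟩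
    · rw [hAS]; exact hI.indep
    · rw [hAS, hAT]; omega
  have hAU : A ⊆ U := union_subset hIU (hJsub.trans inter_subset_left)
  have hAcard : A.ncard = I.ncard + k + 1 := by
    rw [hA, Set.ncard_union_eq (hST.mono hIS hJT) hIfin hJfin]; omega
  have hfinal : A.ncard ≤ mrk L U := le_mrk hLEfin hAindep hAU
  omega
end

section
/- Let M and N be matroids with finite disjoint ground sets S and T, let L be the free product M □ N, and let U ⊆ S ∪ T with |U| = |S|. Suppose every element of V ∩ S is an isthmus (coloop) of M, where V = (S ∪ T) \ U. Then the restriction L|U is isomorphic to M; indeed, for any bijection f : V ∩ S → U ∩ T, the bijection φ₁ : U → S that is the identity on U ∩ S and equals f⁻¹ on U ∩ T is an isomorphism from L|U to M (a set B ⊆ S is a basis of M if and only if φ₁⁻¹(B) is a basis of L|U). -/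
open Set Matroid

/-- Two matroids are isomorphic if there is a bijection between their ground sets
carrying independent sets to independent sets in both directions. -/
def MatroidIso {α β : Type*} (M : Matroid α) (N : Matroid β) : Prop :=
  ∃ e : M.E ≃ N.E, ∀ I : Set M.E,
    M.Indep ((↑) '' I) ↔ N.Indep ((↑) '' (e '' I))

section Aux

variable {α : Type*} {M : Matroid α} {I K X : Set α}

lemma isthmus_insert {e : α} (he : IsIsthmusOf M e) (hI : M.Indep I) :
    M.Indep (insert e I) := by
  obtain ⟨B, hB, hIB⟩ := hI.exists_isBase_superset
  exact hB.indep.subset (insert_subset (he B hB) hIB)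

lemma indep_union_isthmi (hK : K.Finite) (hKi : ∀ e ∈ K, IsIsthmusOf M e)
    (hI : M.Indep I) : M.Indep (I ∪ K) := by
  revert hKi
  refine Set.Finite.induction_on
    (motive := fun s _ => (∀ e ∈ s, IsIsthmusOf M e) → M.Indep (I ∪ s)) _ hK
    (fun _ => by simpa) ?_
  intro a s ha hs ih hKi
  rw [union_insert]
  exact isthmus_insert (hKi a (mem_insert _ _))
    (ih fun e he => hKi e (mem_insert_of_mem _ he))

lemma ncard_le_mrk (hE : M.E.Finite) (hI : M.Indep I) (hIX : I ⊆ X) :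
    I.ncard ≤ mrk M X := by
  refine le_csSup ⟨M.E.ncard, ?_⟩ ⟨I, ⟨hI, hIX⟩, rfl⟩
  rintro n ⟨J, ⟨hJ, -⟩, rfl⟩
  exact ncard_le_ncard hJ.subset_ground hE

lemma mrk_le_ncard (hX : X.Finite) : mrk M X ≤ X.ncard := by
  refine csSup_le ⟨0, ∅, ⟨M.empty_indep, empty_subset _⟩, by simp⟩ ?_
  rintro n ⟨J, ⟨-, hJX⟩, rfl⟩
  exact ncard_le_ncard hJX hX

end Aux

/-- Let `L = M □ N`, `U ⊆ S ∪ T` with `|U| = |S|`, and suppose every element of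
`V ∩ S` is an isthmus of `M`, where `V = (S ∪ T) \ U`.  Then `L|U ≅ M`; indeed for any
bijection `f : V ∩ S → U ∩ T`, the bijection `φ₁ : U → S` which is the identity on
`U ∩ S` and `f⁻¹` on `U ∩ T` is an isomorphism from `L|U` onto `M`: a set `B ⊆ S` is a
basis of `M` iff `φ₁⁻¹(B) = (B ∩ U) ∪ f '' (B \ U)` is a basis of `L|U`. -/
theorem stmt_10 {α : Type*} (M N : Matroid α) (S T : Set α)
    (hS : S.Finite) (hT : T.Finite) (hMS : M.E = S) (hNT : N.E = T)
    (hST : Disjoint S T)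
    (L : Matroid α) (hLE : L.E = S ∪ T)
    (hLI : ∀ A : Set α, L.Indep A ↔ A ⊆ S ∪ T ∧ M.Indep (A ∩ S) ∧
      (A ∩ T).ncard - mrk N (A ∩ T) ≤ mrk M S - mrk M (A ∩ S))
    (U : Set α) (hU : U ⊆ S ∪ T) (hUcard : U.ncard = S.ncard)
    (hVS : ∀ e ∈ ((S ∪ T) \ U) ∩ S, IsIsthmusOf M e) :
    MatroidIso (L ↾ U) M ∧
      ∀ f : α → α, Set.BijOn f (((S ∪ T) \ U) ∩ S) (U ∩ T) →
        ∀ B ⊆ S, (M.IsBase B ↔ (L ↾ U).IsBase ((B ∩ U) ∪ f '' (B \ U))) := by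
  have hUfin : U.Finite := (hS.union hT).subset hU
  have hKset : ((S ∪ T) \ U) ∩ S = S \ U := by
    ext x; simp only [mem_inter_iff, mem_diff, mem_union]; tauto
  have hKi : ∀ e ∈ S \ U, IsIsthmusOf M e := by
    intro e he; exact hVS e (by rw [hKset]; exact he)
  have hUdecomp : (U ∩ S) ∪ (U ∩ T) = U := by
    rw [← inter_union_distrib_left, inter_eq_left.mpr hU]
  have hcardUT : (U ∩ T).ncard = (S \ U).ncard := by
    have h1 : (U ∩ S).ncard + (U ∩ T).ncard = U.ncard := by
      rw [← Set.ncard_union_eq (hST.mono inter_subset_right inter_subset_right)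
        (hUfin.inter_of_left _) (hUfin.inter_of_left _), hUdecomp]
    have h2 : (S ∩ U).ncard + (S \ U).ncard = S.ncard :=
      Set.ncard_inter_add_ncard_diff_eq_ncard S U hS
    rw [inter_comm U S] at h1
    omega
  -- the nullity condition is automatic for subsets of `U`
  have hIndS : ∀ A : Set α, A ⊆ U → M.Indep (A ∩ S) →
      (A ∩ T).ncard - mrk N (A ∩ T) ≤ mrk M S - mrk M (A ∩ S) := by
    intro A hA hAS
    have hAfin : A.Finite := hUfin.subset hA
    have h1 : (A ∩ T).ncard ≤ (S \ U).ncard := by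
      rw [← hcardUT]
      exact ncard_le_ncard (inter_subset_inter_left _ hA) (hUfin.inter_of_left _)
    have h2 : mrk M (A ∩ S) ≤ (A ∩ S).ncard := mrk_le_ncard (hAfin.inter_of_left _)
    have h3 : (A ∩ S).ncard + (S \ U).ncard ≤ mrk M S := by
      have hind : M.Indep ((A ∩ S) ∪ (S \ U)) :=
        indep_union_isthmi hS.diff hKi hAS
      have hsub : (A ∩ S) ∪ (S \ U) ⊆ S := union_subset inter_subset_right diff_subset
      have hdisj : Disjoint (A ∩ S) (S \ U) :=
        disjoint_sdiff_right.mono_left (inter_subset_left.trans hA)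
      calc (A ∩ S).ncard + (S \ U).ncard = ((A ∩ S) ∪ (S \ U)).ncard :=
            (ncard_union_eq hdisj (hAfin.inter_of_left _) hS.diff).symm
        _ ≤ mrk M S := ncard_le_mrk (hMS ▸ hS) hind hsub
    omega
  have hLind : ∀ A : Set α, A ⊆ U → ((L ↾ U).Indep A ↔ M.Indep (A ∩ S)) := by
    intro A hA
    rw [restrict_indep_iff, hLI, and_iff_left hA]
    constructor
    · rintro ⟨-, h, -⟩; exact h
    · intro h; exact ⟨hA.trans hU, h, hIndS A hA h⟩
  have hMBU : ∀ J : Set α, J ⊆ S → (M.Indep J ↔ M.Indep (J ∩ U)) := by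
    intro J hJ
    constructor
    · exact fun h => h.subset inter_subset_left
    · intro h
      have h2 : M.Indep ((J ∩ U) ∪ (J \ U)) :=
        indep_union_isthmi (hS.subset hJ).diff
          (fun e he => hKi e ⟨hJ he.1, he.2⟩) h
      rwa [inter_union_diff] at h2
  have hinterS : ∀ W : Set α, W ⊆ T → ∀ C : Set α, C ⊆ S →
      ((C ∩ U) ∪ W) ∩ S = C ∩ U := by
    intro W hW C hC
    apply subset_antisymm
    · rintro x ⟨h | h, hxS⟩
      · exact h
      · exact absurd hxS (fun h' => disjoint_left.mp hST h' (hW h))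
    · exact fun x hx => ⟨Or.inl hx, hC hx.1⟩
  -- the base characterization (second conjunct, after rewriting the index set)
  have hbase : ∀ f : α → α, Set.BijOn f (S \ U) (U ∩ T) →
      ∀ B, B ⊆ S → (M.IsBase B ↔ (L ↾ U).IsBase ((B ∩ U) ∪ f '' (B \ U))) := by
    intro f hf B hBS
    constructor
    · intro hB
      have hSUB : S \ U ⊆ B := fun e he => hKi e he B hB
      have hBdiff : B \ U = S \ U :=
        subset_antisymm (diff_subset_diff_left hBS) (fun e he => ⟨hSUB he, he.2⟩)
      have hfimg : f '' (B \ U) = U ∩ T := by rw [hBdiff, hf.image_eq]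
      rw [hfimg]
      set X := (B ∩ U) ∪ (U ∩ T) with hX
      have hXU : X ⊆ U := union_subset inter_subset_right inter_subset_left
      have hXS : X ∩ S = B ∩ U := hinterS _ inter_subset_right _ hBS
      have hXind : (L ↾ U).Indep X := by
        rw [hLind X hXU, hXS]; exact hB.indep.subset inter_subset_left
      rw [isBase_iff_maximal_indep]
      refine ⟨hXind, fun J hJ hXJ => ?_⟩
      have hJU : J ⊆ U := by
        have h := hJ.subset_ground; rwa [restrict_ground_eq] at h
      have hJS : M.Indep (J ∩ S) := (hLind J hJU).mp hJ
      have hJind : M.Indep ((J ∩ S) ∪ (S \ U)) :=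
        indep_union_isthmi hS.diff hKi hJS
      have hBsub : B ⊆ (J ∩ S) ∪ (S \ U) := by
        intro x hx
        by_cases hxU : x ∈ U
        · exact Or.inl ⟨hXJ (Or.inl ⟨hx, hxU⟩), hBS hx⟩
        · exact Or.inr ⟨hBS hx, hxU⟩
      have hBeq : B = (J ∩ S) ∪ (S \ U) := hB.eq_of_subset_indep hJind hBsub
      intro x hxJ
      by_cases hxS : x ∈ S
      · have hxB : x ∈ B := by rw [hBeq]; exact Or.inl ⟨hxJ, hxS⟩
        exact Or.inl ⟨hxB, hJU hxJ⟩
      · rcases hU (hJU hxJ) with h | h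
        · exact absurd h hxS
        · exact Or.inr ⟨hJU hxJ, h⟩
    · intro hXbase
      set X := (B ∩ U) ∪ f '' (B \ U) with hX
      have hfsub : f '' (B \ U) ⊆ U ∩ T :=
        (image_mono (f := f) (diff_subset_diff_left hBS)).trans hf.image_eq.subset
      have hXU : X ⊆ U := union_subset inter_subset_right (hfsub.trans inter_subset_left)
      have hXS : X ∩ S = B ∩ U := hinterS _ (hfsub.trans inter_subset_right) _ hBS
      have hBUind : M.Indep (B ∩ U) := by
        rw [← hXS]; exact (hLind X hXU).mp hXbase.indep
      have hSUB : S \ U ⊆ B := by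
        by_contra hc
        obtain ⟨x, hxSU, hxB⟩ := not_subset.mp hc
        have hfx : f x ∈ U ∩ T := hf.mapsTo hxSU
        have hfxX : f x ∉ X := by
          rintro (h | h)
          · exact disjoint_left.mp hST (hBS h.1) hfx.2
          · obtain ⟨y, hy, hyx⟩ := h
            have hyS : y ∈ S \ U := diff_subset_diff_left hBS hy
            exact hxB ((hf.injOn hyS hxSU hyx) ▸ hy.1)
        have hins : (L ↾ U).Indep (insert (f x) X) := by
          rw [hLind _ (insert_subset hfx.1 hXU),
            insert_inter_of_notMem (fun h => disjoint_left.mp hST h hfx.2), hXS]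
          exact hBUind
        have heq := hXbase.eq_of_subset_indep hins (subset_insert _ _)
        exact hfxX (by rw [heq]; exact mem_insert _ _)
      have hBdiff : B \ U = S \ U :=
        subset_antisymm (diff_subset_diff_left hBS) (fun e he => ⟨hSUB he, he.2⟩)
      have hfimg : f '' (B \ U) = U ∩ T := by rw [hBdiff, hf.image_eq]
      have hBind : M.Indep B := (hMBU B hBS).mpr hBUind
      rw [isBase_iff_maximal_indep]
      refine ⟨hBind, fun J hJ hBJ => ?_⟩
      have hJS : J ⊆ S := hMS ▸ hJ.subset_ground
      have hX'U : (J ∩ U) ∪ (U ∩ T) ⊆ U :=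
        union_subset inter_subset_right inter_subset_left
      have hX'ind : (L ↾ U).Indep ((J ∩ U) ∪ (U ∩ T)) := by
        rw [hLind _ hX'U, hinterS _ inter_subset_right _ hJS]
        exact hJ.subset inter_subset_left
      have hXX' : X ⊆ (J ∩ U) ∪ (U ∩ T) := by
        rw [hX, hfimg]
        exact union_subset_union_left _ (inter_subset_inter_left _ hBJ)
      have heq := hXbase.eq_of_subset_indep hX'ind hXX'
      intro x hxJ
      by_cases hxU : x ∈ U
      · have hx' : x ∈ X := by rw [heq]; exact Or.inl ⟨hxJ, hxU⟩
        have hx2 : x ∈ X ∩ S := ⟨hx', hJS hxJ⟩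
        rw [hXS] at hx2; exact hx2.1
      · exact hSUB ⟨hJS hxJ, hxU⟩
  -- a bijection from `U ∩ T` to `S \ U`
  obtain ⟨g, hg⟩ : ∃ g : α → α, BijOn g (U ∩ T) (S \ U) := by
    rcases isEmpty_or_nonempty α with hα | hα
    · refine ⟨id, ?_⟩
      have h1 : U ∩ T = ∅ := eq_empty_of_isEmpty _
      have h2 : S \ U = ∅ := eq_empty_of_isEmpty _
      rw [h1, h2]; exact bijOn_empty id
    · refine (hUfin.inter_of_left T).exists_bijOn_of_encard_eq ?_
      rw [← (hUfin.inter_of_left T).cast_ncard_eq, ← (hS.diff (t := U)).cast_ncard_eq, hcardUT]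
  -- the isomorphism
  have hiso : MatroidIso (L ↾ U) M := by
    classical
    set φ : α → α := fun x => if x ∈ S then x else g x with hφ
    have hmap1 : ∀ x ∈ U ∩ S, φ x = x := fun x hx => if_pos hx.2
    have hmap2 : ∀ x ∈ U ∩ T, φ x = g x :=
      fun x hx => if_neg (fun hxS => disjoint_left.mp hST hxS hx.2)
    have hb1 : BijOn φ (U ∩ S) (U ∩ S) :=
      (bijOn_id _).congr (fun x hx => (hmap1 x hx).symm)
    have hb2 : BijOn φ (U ∩ T) (S \ U) := hg.congr (fun x hx => (hmap2 x hx).symm)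
    have hinj : InjOn φ ((U ∩ S) ∪ (U ∩ T)) := by
      rintro x (hx | hx) y (hy | hy) hxy
      · rwa [hmap1 x hx, hmap1 y hy] at hxy
      · exfalso
        rw [hmap1 x hx] at hxy
        exact (hb2.mapsTo hy).2 (hxy ▸ hx.1)
      · exfalso
        rw [hmap1 y hy] at hxy
        exact (hb2.mapsTo hx).2 (hxy ▸ hy.1)
      · rw [hmap2 x hx, hmap2 y hy] at hxy
        exact hg.injOn hx hy hxy
    have hbij : BijOn φ U S := by
      have h := (hb1.union hb2 hinj)
      rw [hUdecomp] at h
      have hSeq : (U ∩ S) ∪ (S \ U) = S := by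
        ext x; simp only [mem_union, mem_inter_iff, mem_diff]; tauto
      rwa [hSeq] at h
    refine ⟨(Equiv.setCongr (restrict_ground_eq (M := L) (R := U))).trans
      ((hbij.equiv φ).trans (Equiv.setCongr hMS.symm)), fun I => ?_⟩
    set e := (Equiv.setCongr (restrict_ground_eq (M := L) (R := U))).trans
      ((hbij.equiv φ).trans (Equiv.setCongr hMS.symm))
    have hcoe : ∀ x : ((L ↾ U).E : Set α), ((e x : M.E) : α) = φ (x : α) := fun x => rfl
    have hI_sub : ((↑) '' I : Set α) ⊆ U := by
      rintro x ⟨y, -, rfl⟩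
      exact y.2
    have himg : ((↑) '' (e '' I) : Set α) = φ '' ((↑) '' I) := by
      rw [image_image, image_image]
      exact image_congr (fun x _ => hcoe x)
    rw [himg, hLind _ hI_sub]
    set A : Set α := (↑) '' I
    have hA1 : A ∩ S ⊆ U ∩ S := inter_subset_inter_left _ hI_sub
    have hA2 : A ∩ T ⊆ U ∩ T := inter_subset_inter_left _ hI_sub
    have hsplit : A = (A ∩ S) ∪ (A ∩ T) := by
      rw [← inter_union_distrib_left]
      exact (inter_eq_left.mpr (hI_sub.trans hU)).symm
    have himgA : φ '' A = (A ∩ S) ∪ g '' (A ∩ T) := by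
      conv_lhs => rw [hsplit]
      rw [image_union]
      congr 1
      · rw [image_congr (fun x hx => hmap1 x (hA1 hx)), image_id']
      · exact image_congr (fun x hx => hmap2 x (hA2 hx))
    rw [himgA]
    have hgsub : g '' (A ∩ T) ⊆ S \ U :=
      (image_mono (f := g) hA2).trans hg.image_eq.subset
    constructor
    · intro h
      exact indep_union_isthmi ((hS.diff (t := U)).subset hgsub)
        (fun x hx => hKi x (hgsub hx)) h
    · intro h
      exact h.subset subset_union_left
  refine ⟨hiso, fun f hf B hBS => ?_⟩
  rw [hKset] at hf
  exact hbase f hf B hBS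
end

section
/- Let M and N be matroids with finite disjoint ground sets S and T, and let L be the free product M □ N. Let U ⊆ S ∪ T satisfy |U| = |S| and rk_L(U) = rk(M), and let V = (S ∪ T) \ U. Then there exist a bijective weak map from L|U to M and a bijective weak map from L/U to N; moreover these can be chosen as follows: for any bijection f : V ∩ S → U ∩ T, the bijection φ₁ : U → S that is the identity on U ∩ S and equals f⁻¹ on U ∩ T is a weak map from L|U to M, and the bijection φ₂ : V → T that is the identity on V ∩ T and equals f on V ∩ S is a weak map from L/U to N. -/
open Set Matroid

/-- The contraction `L / C`, defined as the dual of the deletion of `C` from the dual: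
`L / C = (L✶ \ C)✶`. -/
noncomputable def mcontract {α : Type*} (L : Matroid α) (C : Set α) : Matroid α :=
  (L✶ ↾ (L.E \ C))✶

section Aux
variable {α : Type*} {M L : Matroid α} {I J B D X U : Set α}

lemma ncard_le_of_basis'_aux (hE : M.E.Finite) (hJ : M.Indep J) (hJX : J ⊆ X)
    (hI : M.IsBasis' I X) : J.ncard ≤ I.ncard := by
  obtain ⟨J', hJ', hJJ'⟩ := hJ.subset_isBasis'_of_subset hJX
  have h1 : (M ↾ X).IsBase J' := isBase_restrict_iff'.2 hJ'
  have h2 : (M ↾ X).IsBase I := isBase_restrict_iff'.2 hI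
  have hcard : J'.ncard = I.ncard := by
    rw [Set.ncard_def, h1.encard_eq_encard_of_isBase h2, ← Set.ncard_def]
  exact (Set.ncard_le_ncard hJJ' (hE.subset hJ'.indep.subset_ground)).trans hcard.le

lemma mrk_eq_ncard_of_basis'_aux (hE : M.E.Finite) (hI : M.IsBasis' I X) :
    mrk M X = I.ncard := by
  refine le_antisymm (csSup_le ⟨I.ncard, ⟨I, ⟨hI.indep, hI.subset⟩, rfl⟩⟩ ?_) (le_csSup ?_ ?_)
  · rintro n ⟨J, ⟨hJind, hJX⟩, rfl⟩
    exact ncard_le_of_basis'_aux hE hJind hJX hI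
  · refine ⟨I.ncard, ?_⟩
    rintro n ⟨J, ⟨hJind, hJX⟩, rfl⟩
    exact ncard_le_of_basis'_aux hE hJind hJX hI
  · exact ⟨I, ⟨hI.indep, hI.subset⟩, rfl⟩

lemma indep_ncard_le_mrk_aux (hE : M.E.Finite) (hJ : M.Indep J) (hJX : J ⊆ X) :
    J.ncard ≤ mrk M X := by
  obtain ⟨I, hI⟩ := M.exists_isBasis' X
  rw [mrk_eq_ncard_of_basis'_aux hE hI]
  exact ncard_le_of_basis'_aux hE hJ hJX hI

lemma mrk_indep_aux (hE : M.E.Finite) (hI : M.Indep I) : mrk M I = I.ncard :=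
  mrk_eq_ncard_of_basis'_aux hE hI.isBasis_self.isBasis'

lemma basis'_of_ncard_aux (hE : M.E.Finite) (hB : M.Indep B) (hBX : B ⊆ X)
    (hcard : mrk M X ≤ B.ncard) : M.IsBasis' B X := by
  obtain ⟨J, hJ, hBJ⟩ := hB.subset_isBasis'_of_subset hBX
  have h1 := mrk_eq_ncard_of_basis'_aux hE hJ
  have h2 : B = J :=
    Set.eq_of_subset_of_ncard_le hBJ (by omega) (hE.subset hJ.indep.subset_ground)
  rwa [h2]

lemma contract_indep_of_exists_aux (hUE : U ⊆ L.E) (hD : D ⊆ L.E \ U)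
    (hJ : L.IsBasis' J U) (hind : L.Indep (D ∪ J)) : (mcontract L U).Indep D := by
  obtain ⟨B, hB, hDJB⟩ := hind.exists_isBase_superset
  have hJU : L.IsBasis J U := hJ.isBasis hUE
  have hBU : J = B ∩ U :=
    hJU.eq_of_subset_indep (hB.indep.inter_right U)
      (subset_inter (subset_union_right.trans hDJB) hJ.subset) inter_subset_right
  have hbasis : L✶.IsBasis ((L.E \ B) ∩ (L.E \ U)) (L.E \ U) :=
    hB.compl_inter_isBasis_of_inter_isBasis (hBU ▸ hJU)
  have hbase : (L✶ ↾ (L.E \ U)).IsBase ((L.E \ B) ∩ (L.E \ U)) := hbasis.restrict_isBase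
  show ((L✶ ↾ (L.E \ U))✶).Indep D
  rw [dual_indep_iff_exists']
  refine ⟨by simpa using hD, ⟨_, hbase, ?_⟩⟩
  exact Set.disjoint_left.2 fun x hxD hx =>
    hx.1.2 (hDJB (subset_union_left hxD))

end Aux



/-- **Theorem 6.** Let `L = M □ N` and let `U ⊆ S ∪ T` satisfy `|U| = |S|` and
`rk_L(U) = rk(M)`, with `V = (S ∪ T) \ U`.  Then there exist bijective weak maps
`L|U → M` and `L/U → N`; indeed, for any bijection `f : V ∩ S → U ∩ T`, the bijection
`φ₁ : U → S` (identity on `U ∩ S`, `f⁻¹` on `U ∩ T`) is a weak map `L|U → M`, and the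
bijection `φ₂ : V → T` (identity on `V ∩ T`, `f` on `V ∩ S`) is a weak map `L/U → N`. -/
theorem stmt_12 {α : Type*} (M N : Matroid α) (S T : Set α)
    (hS : S.Finite) (hT : T.Finite) (hMS : M.E = S) (hNT : N.E = T)
    (hST : Disjoint S T)
    (L : Matroid α) (hLE : L.E = S ∪ T)
    (hLI : ∀ A : Set α, L.Indep A ↔ A ⊆ S ∪ T ∧ M.Indep (A ∩ S) ∧
      (A ∩ T).ncard - mrk N (A ∩ T) ≤ mrk M S - mrk M (A ∩ S))
    (U : Set α) (hU : U ⊆ S ∪ T) (hUcard : U.ncard = S.ncard)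
    (hrk : mrk L U = mrk M S) :
    (∃ f : α → α, Set.BijOn f (((S ∪ T) \ U) ∩ S) (U ∩ T)) ∧
      ∀ f : α → α, Set.BijOn f (((S ∪ T) \ U) ∩ S) (U ∩ T) →
        (∀ A ⊆ S, M.Indep A → (L ↾ U).Indep ((A ∩ U) ∪ f '' (A \ U))) ∧
        (∀ E ⊆ T, N.Indep E →
          (mcontract L U).Indep ((E \ U) ∪ ((((S ∪ T) \ U) ∩ S) ∩ f ⁻¹' E))) := by
  have hLfin : L.E.Finite := hLE ▸ (hS.union hT)
  have hMfin : M.E.Finite := hMS ▸ hS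
  have hNfin : N.E.Finite := hNT ▸ hT
  have hd := Set.disjoint_left.1 hST
  have hVS : ((S ∪ T) \ U) ∩ S = S \ U := by
    ext x
    constructor
    · rintro ⟨⟨-, hxU⟩, hxS⟩; exact ⟨hxS, hxU⟩
    · rintro ⟨hxS, hxU⟩; exact ⟨⟨Or.inl hxS, hxU⟩, hxS⟩
  have hsplitcard : ∀ Z : Set α, Z ⊆ S ∪ T →
      (Z ∩ S).ncard + (Z ∩ T).ncard = Z.ncard := by
    intro Z hZ
    rw [← Set.ncard_union_eq (hST.mono inter_subset_right inter_subset_right)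
      (hS.subset inter_subset_right) (hT.subset inter_subset_right),
      ← Set.inter_union_distrib_left, Set.inter_eq_self_of_subset_left hZ]
  have hUsplit := hsplitcard U hU
  have hSsplit : (S ∩ U).ncard + (S \ U).ncard = S.ncard :=
    Set.ncard_inter_add_ncard_diff_eq_ncard S U hS
  have hUS_comm : (U ∩ S).ncard = (S ∩ U).ncard := by rw [Set.inter_comm]
  have hcardUT : (U ∩ T).ncard = (S \ U).ncard := by omega
  set r := mrk M S with hr
  obtain ⟨B₀, hB₀⟩ := L.exists_isBasis' U
  have hB₀card : B₀.ncard = r := by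
    rw [← mrk_eq_ncard_of_basis'_aux hLfin hB₀, hrk]
  have hB₀U : B₀ ⊆ U := hB₀.subset
  have hB₀ST : B₀ ⊆ S ∪ T := hB₀U.trans hU
  have hB₀ind := (hLI B₀).1 hB₀.indep
  have hsle : r ≤ mrk M (U ∩ S) + (U ∩ T).ncard := by
    have h1 : (B₀ ∩ S).ncard ≤ mrk M (U ∩ S) :=
      indep_ncard_le_mrk_aux hMfin hB₀ind.2.1 (inter_subset_inter_left _ hB₀U)
    have h2 : (B₀ ∩ T).ncard ≤ (U ∩ T).ncard :=
      Set.ncard_le_ncard (inter_subset_inter_left _ hB₀U) (hT.subset inter_subset_right)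
    have h3 := hsplitcard B₀ hB₀ST
    omega
  constructor
  · rw [hVS]
    rcases isEmpty_or_nonempty α with h | h
    · exact ⟨id, by simp [Set.eq_empty_of_isEmpty]⟩
    · refine (hS.subset diff_subset).exists_bijOn_of_encard_eq ?_
      rw [← (hS.subset diff_subset).cast_ncard_eq,
        ← (hT.subset inter_subset_right).cast_ncard_eq, hcardUT]
  intro f hf
  rw [hVS] at hf
  constructor
  · -- restriction part
    intro A hAS hA
    have hAU_sub : A \ U ⊆ S \ U := Set.diff_subset_diff_left hAS
    have himg : f '' (A \ U) ⊆ U ∩ T :=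
      (Set.image_mono hAU_sub).trans hf.mapsTo.image_subset
    rw [Matroid.restrict_indep_iff]
    have hGS : (A ∩ U ∪ f '' (A \ U)) ∩ S = A ∩ U := by
      apply subset_antisymm
      · rintro x ⟨hx | hx, hxS⟩
        · exact hx
        · exact absurd (himg hx).2 (hd hxS)
      · intro x hx; exact ⟨Or.inl hx, hAS hx.1⟩
    have hGT : (A ∩ U ∪ f '' (A \ U)) ∩ T = f '' (A \ U) := by
      apply subset_antisymm
      · rintro x ⟨hx | hx, hxT⟩
        · exact absurd hxT (hd (hAS hx.1))
        · exact hx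
      · intro x hx; exact ⟨Or.inr hx, (himg hx).2⟩
    refine ⟨(hLI _).2 ⟨?_, ?_, ?_⟩, ?_⟩
    · rintro x (h | h)
      · exact Or.inl (hAS h.1)
      · exact Or.inr (himg h).2
    · rw [hGS]; exact hA.subset inter_subset_left
    · rw [hGS, hGT]
      have hc1 : (f '' (A \ U)).ncard = (A \ U).ncard :=
        Set.ncard_image_of_injOn (hf.injOn.mono hAU_sub)
      have hc2 : mrk M (A ∩ U) = (A ∩ U).ncard :=
        mrk_indep_aux hMfin (hA.subset inter_subset_left)
      have hc3 : (A ∩ U).ncard + (A \ U).ncard = A.ncard :=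
        Set.ncard_inter_add_ncard_diff_eq_ncard A U (hS.subset hAS)
      have hc4 : A.ncard ≤ r := indep_ncard_le_mrk_aux hMfin hA (hMS ▸ hAS)
      omega
    · rintro x (h | h)
      · exact h.2
      · exact (himg h).1
  · -- contraction part
    intro E hET hE
    rw [hVS]
    have hUE : U ⊆ L.E := hLE ▸ hU
    set A' := (S \ U) ∩ f ⁻¹' E with hA'
    have hA'sub : A' ⊆ S \ U := inter_subset_left
    set D := E \ U ∪ A' with hD
    have hDdisj : D ⊆ L.E \ U := by
      rw [hLE]
      rintro x (⟨hx, hxU⟩ | hx)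
      · exact ⟨Or.inr (hET hx), hxU⟩
      · exact ⟨Or.inl (hA'sub hx).1, (hA'sub hx).2⟩
    have hA'card : A'.ncard ≤ (E ∩ U).ncard := by
      have himg : f '' A' ⊆ E ∩ U := by
        rintro y ⟨x, hx, rfl⟩
        exact ⟨hx.2, (hf.mapsTo hx.1).1⟩
      calc A'.ncard = (f '' A').ncard :=
            (Set.ncard_image_of_injOn (hf.injOn.mono hA'sub)).symm
        _ ≤ (E ∩ U).ncard :=
            Set.ncard_le_ncard himg (hT.subset (inter_subset_left.trans hET))
    have hEsplit : (E ∩ U).ncard + (E \ U).ncard = E.ncard :=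
      Set.ncard_inter_add_ncard_diff_eq_ncard E U (hT.subset hET)
    set s := mrk M (U ∩ S) with hs
    by_cases hcase : s + (U ∩ T).ncard ≤ r
    · -- Case A : s + |U∩T| = r
      obtain ⟨I, hI⟩ := M.exists_isBasis' (U ∩ S)
      have hIcard : I.ncard = s := (mrk_eq_ncard_of_basis'_aux hMfin hI).symm
      have hIUS : I ⊆ U ∩ S := hI.subset
      have hIS : I ⊆ S := hIUS.trans inter_subset_right
      have hIfin : I.Finite := hS.subset hIS
      obtain ⟨J₀, hJ₀, hIJ₀⟩ := hI.indep.subset_isBasis'_of_subset (hMS ▸ hIS : I ⊆ M.E)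
      have hJ₀card : J₀.ncard = mrk M M.E := (mrk_eq_ncard_of_basis'_aux hMfin hJ₀).symm
      rw [hMS] at hJ₀card
      have hJ₀S : J₀ ⊆ S := hMS ▸ hJ₀.subset
      have hJ₀fin : J₀.Finite := hS.subset hJ₀S
      have hdiffsub : J₀ \ I ⊆ S \ U := by
        rintro x ⟨hxJ, hxI⟩
        refine ⟨hJ₀S hxJ, fun hxU => ?_⟩
        have hins : M.Indep (insert x I) := hJ₀.indep.subset (Set.insert_subset hxJ hIJ₀)
        have hle : (insert x I).ncard ≤ s :=
          indep_ncard_le_mrk_aux hMfin hins (Set.insert_subset ⟨hxU, hJ₀S hxJ⟩ hIUS)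
        rw [Set.ncard_insert_of_notMem hxI hIfin] at hle
        omega
      have hdiffcard : (J₀ \ I).ncard = r - s := by
        rw [Set.ncard_diff hIJ₀ hIfin]
        omega
      have hJ₀diff : J₀ \ I = S \ U := by
        apply Set.eq_of_subset_of_ncard_le hdiffsub _ (hS.subset diff_subset)
        omega
      have hSUJ₀ : S \ U ⊆ J₀ := by
        rw [← hJ₀diff]; exact diff_subset
      set B := I ∪ (U ∩ T) with hB
      have hBU : B ⊆ U := union_subset (hIUS.trans inter_subset_left) inter_subset_left
      have hdisjB : Disjoint I (U ∩ T) := hST.mono hIS inter_subset_right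
      have hBS : B ∩ S = I := by
        apply subset_antisymm
        · rintro x ⟨hx | hx, hxS⟩
          · exact hx
          · exact absurd hx.2 (hd hxS)
        · intro x hx; exact ⟨Or.inl hx, hIS hx⟩
      have hBT : B ∩ T = U ∩ T := by
        apply subset_antisymm
        · rintro x ⟨hx | hx, hxT⟩
          · exact absurd hxT (hd (hIS hx))
          · exact hx
        · intro x hx; exact ⟨Or.inr hx, hx.2⟩
      have hmrkI : mrk M I = I.ncard := mrk_indep_aux hMfin hI.indep
      have hBind : L.Indep B := by
        rw [hLI]
        refine ⟨fun x hx => hU (hBU hx), by rw [hBS]; exact hI.indep, ?_⟩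
        rw [hBS, hBT, hmrkI]
        omega
      have hBcard : B.ncard = r := by
        rw [Set.ncard_union_eq hdisjB hIfin (hT.subset inter_subset_right)]
        omega
      have hBbasis : L.IsBasis' B U :=
        basis'_of_ncard_aux hLfin hBind hBU (by rw [hrk, hBcard])
      have hXS : (D ∪ B) ∩ S = A' ∪ I := by
        apply subset_antisymm
        · rintro x ⟨hx, hxS⟩
          rcases hx with (⟨hxE, -⟩ | hx) | hx | hx
          · exact absurd (hET hxE) (hd hxS)
          · exact Or.inl hx
          · exact Or.inr hx
          · exact absurd hx.2 (hd hxS)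
        · rintro x (hx | hx)
          · exact ⟨Or.inl (Or.inr hx), (hA'sub hx).1⟩
          · exact ⟨Or.inr (Or.inl hx), hIS hx⟩
      have hXT : (D ∪ B) ∩ T = (E \ U) ∪ (U ∩ T) := by
        apply subset_antisymm
        · rintro x ⟨hx, hxT⟩
          rcases hx with (hx | hx) | hx | hx
          · exact Or.inl hx
          · exact absurd hxT (hd (hA'sub hx).1)
          · exact absurd hxT (hd (hIS hx))
          · exact Or.inr hx
        · rintro x (hx | hx)
          · exact ⟨Or.inl (Or.inl hx), hET hx.1⟩
          · exact ⟨Or.inr (Or.inr hx), hx.2⟩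
      have hXind : M.Indep (A' ∪ I) :=
        hJ₀.indep.subset (union_subset (hA'sub.trans hSUJ₀) hIJ₀)
      have hDBind : L.Indep (D ∪ B) := by
        rw [hLI]
        refine ⟨?_, by rw [hXS]; exact hXind, ?_⟩
        · rintro x (hx | hx)
          · exact hLE ▸ (hDdisj hx).1
          · exact hU (hBU hx)
        · rw [hXS, hXT]
          have h1 : mrk M (A' ∪ I) = A'.ncard + I.ncard := by
            rw [mrk_indep_aux hMfin hXind,
              Set.ncard_union_eq
                (Set.disjoint_left.2 fun x hxA hxI => (hA'sub hxA).2 (hIUS hxI).1)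
                (hS.subset (hA'sub.trans diff_subset)) hIfin]
          have h2 : E.ncard ≤ mrk N ((E \ U) ∪ (U ∩ T)) := by
            apply indep_ncard_le_mrk_aux hNfin hE
            intro x hx
            by_cases hxU : x ∈ U
            · exact Or.inr ⟨hxU, hET hx⟩
            · exact Or.inl ⟨hx, hxU⟩
          have h3 : ((E \ U) ∪ (U ∩ T)).ncard ≤ (E \ U).ncard + (U ∩ T).ncard :=
            Set.ncard_union_le _ _
          omega
      exact contract_indep_of_exists_aux hUE hDdisj hBbasis hDBind
    · -- Case B : r < s + |U∩T| : every element of U ∩ T is a loop of N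
      push_neg at hcase
      obtain ⟨I, hI⟩ := M.exists_isBasis' (U ∩ S)
      have hIcard : I.ncard = s := (mrk_eq_ncard_of_basis'_aux hMfin hI).symm
      have hIS : I ⊆ S := hI.subset.trans inter_subset_right
      have hsler : s ≤ r := by
        have := indep_ncard_le_mrk_aux hMfin hI.indep (hMS ▸ hIS : I ⊆ M.E)
        rw [hMS] at this
        omega
      have hloops : E ∩ U = ∅ := by
        by_contra hne
        obtain ⟨x, hxE, hxU⟩ := Set.nonempty_iff_ne_empty.2 hne
        have hxT : x ∈ T := hET hxE
        have hxUT : x ∈ U ∩ T := ⟨hxU, hxT⟩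
        have hsub : r - s ≤ ((U ∩ T) \ {x}).ncard := by
          rw [Set.ncard_diff (Set.singleton_subset_iff.2 hxUT)
            (Set.finite_singleton x)]
          rw [Set.ncard_singleton]
          omega
        obtain ⟨X, hXsub, hXcard⟩ := Set.exists_subset_card_eq hsub
        have hxX : x ∉ X := fun h => (hXsub h).2 rfl
        have hXUT : X ⊆ U ∩ T := hXsub.trans diff_subset
        have hXfin : X.Finite := hT.subset (hXUT.trans inter_subset_right)
        have hGU : I ∪ insert x X ⊆ U :=
          union_subset (hI.subset.trans inter_subset_left)
            (Set.insert_subset hxU (hXUT.trans inter_subset_left))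
        have hGS : (I ∪ insert x X) ∩ S = I := by
          apply subset_antisymm
          · rintro x' ⟨hx' | hx', hxS⟩
            · exact hx'
            · rcases hx' with rfl | hx'
              · exact absurd hxT (hd hxS)
              · exact absurd (hXUT hx').2 (hd hxS)
          · intro x' hx'; exact ⟨Or.inl hx', hIS hx'⟩
        have hGT : (I ∪ insert x X) ∩ T = insert x X := by
          apply subset_antisymm
          · rintro x' ⟨hx' | hx', hxT'⟩
            · exact absurd hxT' (hd (hIS hx'))
            · exact hx'
          · rintro x' hx'
            rcases hx' with rfl | hx'
            · exact ⟨Or.inr (Or.inl rfl), hxT⟩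
            · exact ⟨Or.inr (Or.inr hx'), (hXUT hx').2⟩
        have hGind : L.Indep (I ∪ insert x X) := by
          rw [hLI]
          refine ⟨fun y hy => hU (hGU hy), by rw [hGS]; exact hI.indep, ?_⟩
          rw [hGS, hGT, mrk_indep_aux hMfin hI.indep]
          have h1 : (insert x X).ncard = X.ncard + 1 :=
            Set.ncard_insert_of_notMem hxX hXfin
          have h2 : 1 ≤ mrk N (insert x X) := by
            have hx1 : N.Indep {x} := hE.subset (Set.singleton_subset_iff.2 hxE)
            have := indep_ncard_le_mrk_aux hNfin hx1
              (Set.singleton_subset_iff.2 (Set.mem_insert x X))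
            simpa [Set.ncard_singleton] using this
          omega
        have hle : (I ∪ insert x X).ncard ≤ r := by
          rw [← hrk]
          exact indep_ncard_le_mrk_aux hLfin hGind hGU
        have hGcard : (I ∪ insert x X).ncard = I.ncard + (insert x X).ncard :=
          Set.ncard_union_eq
            (hST.mono hIS (Set.insert_subset hxT (hXUT.trans inter_subset_right)))
            (hS.subset hIS) (hXfin.insert x)
        have h1 : (insert x X).ncard = X.ncard + 1 :=
          Set.ncard_insert_of_notMem hxX hXfin
        omega
      have hA'empty : A' = ∅ := by
        rw [hA']
        ext x
        simp only [Set.mem_inter_iff, Set.mem_preimage, Set.mem_empty_iff_false, iff_false,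
          not_and]
        intro hxSU hfx
        have : f x ∈ E ∩ U := ⟨hfx, (hf.mapsTo hxSU).1⟩
        rw [hloops] at this
        exact this
      have hEU : E \ U = E := by
        apply subset_antisymm diff_subset
        intro x hx
        refine ⟨hx, fun hxU => ?_⟩
        have : x ∈ E ∩ U := ⟨hx, hxU⟩
        rw [hloops] at this
        exact this
      have hDE : D = E := by rw [hD, hA'empty, hEU, union_empty]
      rw [hDE] at hDdisj ⊢
      obtain ⟨B, hB⟩ := L.exists_isBasis' U
      have hBcard : B.ncard = r := by
        rw [← mrk_eq_ncard_of_basis'_aux hLfin hB, hrk]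
      have hBhLI := (hLI B).1 hB.indep
      have hBsplit : (B ∩ S).ncard + (B ∩ T).ncard = B.ncard :=
        hsplitcard B (hB.subset.trans hU)
      have hXS : (E ∪ B) ∩ S = B ∩ S := by
        apply subset_antisymm
        · rintro x ⟨hx | hx, hxS⟩
          · exact absurd (hET hx) (hd hxS)
          · exact ⟨hx, hxS⟩
        · intro x hx; exact ⟨Or.inr hx.1, hx.2⟩
      have hXT : (E ∪ B) ∩ T = E ∪ (B ∩ T) := by
        apply subset_antisymm
        · rintro x ⟨hx | hx, hxT⟩
          · exact Or.inl hx
          · exact Or.inr ⟨hx, hxT⟩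
        · rintro x (hx | hx)
          · exact ⟨Or.inl hx, hET hx⟩
          · exact ⟨Or.inr hx.1, hx.2⟩
      have hDB : L.Indep (E ∪ B) := by
        rw [hLI]
        refine ⟨union_subset (fun x hx => Or.inr (hET hx)) (hB.subset.trans hU),
          by rw [hXS]; exact hBhLI.2.1, ?_⟩
        rw [hXS, hXT]
        have h1 : mrk M (B ∩ S) = (B ∩ S).ncard := mrk_indep_aux hMfin hBhLI.2.1
        have h2 : E.ncard ≤ mrk N (E ∪ B ∩ T) :=
          indep_ncard_le_mrk_aux hNfin hE subset_union_left
        have h3 : (E ∪ B ∩ T).ncard ≤ E.ncard + (B ∩ T).ncard := Set.ncard_union_le _ _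
        omega
      exact contract_indep_of_exists_aux hUE hDdisj hB hDB
end
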